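/- A metric space (X,d) is Bourbaki-complete if and only if the closure of every Bourbaki-bounded subset of X is compact. -/

import Mathlib

open Metric Filter Set

/-- Iterated chain-ball: `chainBall x eps m` is the set of points joinable to `x`
by a chain of `m + 1` steps each of length `< eps`; `chainBall x eps 0` is the open
ball (corresponding to `B^1`), and `chainBall x eps m` corresponds to `B^(m+1)`. -/
def chainBall {X : Type*} [PseudoMetricSpace X] (x : X) (eps : Real) : Nat -> Set X
  | 0 => Metric.ball x eps
  | m + 1 => Set.iUnion fun y : X => Set.iUnion fun _ : y ∈ chainBall x eps m => Metric.ball y eps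

/-- `B` is Bourbaki-bounded in `X`. -/
def IsBourbakiBounded {X : Type*} [PseudoMetricSpace X] (B : Set X) : Prop :=
  ∀ ε > (0 : ℝ), ∃ m : ℕ, ∃ s : Finset X, B ⊆ ⋃ x ∈ s, chainBall x ε m

/-- A sequence is Bourbaki-Cauchy in `X`. -/
def BourbakiCauchySeq {X : Type*} [PseudoMetricSpace X] (u : ℕ → X) : Prop :=
  ∀ ε > (0 : ℝ), ∃ m n₀ : ℕ, ∃ p : X, ∀ n ≥ n₀, u n ∈ chainBall p ε m

/-- A metric space is (sequentially) Bourbaki-complete if every Bourbaki-Cauchy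
sequence has a cluster point. -/
def IsBourbakiComplete (X : Type*) [PseudoMetricSpace X] : Prop :=
  ∀ u : ℕ → X, BourbakiCauchySeq u → ∃ x : X, MapClusterPt x atTop u

section Aux
variable {X : Type*} [PseudoMetricSpace X]

lemma chainBall_succ (x : X) (ε : ℝ) (m : ℕ) :
    chainBall x ε (m + 1) = ⋃ y ∈ chainBall x ε m, Metric.ball y ε := rfl

lemma chainBall_subset_succ {x : X} {ε : ℝ} (hε : 0 < ε) (m : ℕ) :
    chainBall x ε m ⊆ chainBall x ε (m + 1) := by
  intro z hz
  rw [chainBall_succ]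
  exact Set.mem_biUnion hz (Metric.mem_ball_self hε)

lemma chainBall_mono_m {x : X} {ε : ℝ} (hε : 0 < ε) {m m' : ℕ} (h : m ≤ m') :
    chainBall x ε m ⊆ chainBall x ε m' := by
  induction h with
  | refl => exact subset_rfl
  | step _ ih => exact ih.trans (chainBall_subset_succ hε _)

lemma mem_chainBall_self {x : X} {ε : ℝ} (hε : 0 < ε) (m : ℕ) :
    x ∈ chainBall x ε m :=
  chainBall_mono_m hε (Nat.zero_le m) (Metric.mem_ball_self hε)

lemma chainBall_mono_eps {x : X} {ε ε' : ℝ} (h : ε ≤ ε') (m : ℕ) :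
    chainBall x ε m ⊆ chainBall x ε' m := by
  induction m with
  | zero => exact Metric.ball_subset_ball h
  | succ m ih =>
    intro z hz
    rw [chainBall_succ] at hz ⊢
    obtain ⟨y, hy, hz⟩ := Set.mem_iUnion₂.mp hz
    exact Set.mem_biUnion (ih hy) (Metric.ball_subset_ball h hz)

lemma closure_chainBall {x : X} {ε : ℝ} (hε : 0 < ε) (m : ℕ) :
    closure (chainBall x ε m) ⊆ chainBall x ε (m + 1) := by
  intro z hz
  obtain ⟨y, hy, hd⟩ := Metric.mem_closure_iff.mp hz ε hε
  rw [chainBall_succ]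
  exact Set.mem_biUnion hy (by simpa [Metric.mem_ball, dist_comm] using hd)

lemma isBourbakiBounded_closure {B : Set X} (hB : IsBourbakiBounded B) :
    IsBourbakiBounded (closure B) := by
  intro ε hε
  obtain ⟨m, s, hs⟩ := hB ε hε
  refine ⟨m + 1, s, ?_⟩
  have : closure B ⊆ closure (⋃ x ∈ s, chainBall x ε m) := closure_mono hs
  refine this.trans ?_
  rw [s.closure_biUnion]
  exact Set.iUnion₂_mono fun i _ => closure_chainBall hε m

/-- pigeonhole -/
lemma exists_infinite_subset {u : ℕ → X} {S : Set ℕ} (hS : S.Infinite)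
    {s : Finset X} {ε : ℝ} {m : ℕ} (h : ∀ n ∈ S, u n ∈ ⋃ x ∈ s, chainBall x ε m) :
    ∃ p ∈ s, {n ∈ S | u n ∈ chainBall p ε m}.Infinite := by
  by_contra hcon
  push_neg at hcon
  apply hS
  have : S ⊆ ⋃ p ∈ s, {n ∈ S | u n ∈ chainBall p ε m} := by
    intro n hn
    obtain ⟨p, hp, hmem⟩ := Set.mem_iUnion₂.mp (h n hn)
    exact Set.mem_biUnion hp ⟨hn, hmem⟩
  exact (Set.Finite.biUnion s.finite_toSet fun p hp =>
    Set.not_infinite.mp (by intro hinf; exact hinf (hcon p hp))).subset this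

/-- every sequence in a Bourbaki-bounded set has a Bourbaki-Cauchy subsequence -/
lemma exists_bourbakiCauchy_subseq {A : Set X} (hA : IsBourbakiBounded A)
    {u : ℕ → X} (hu : ∀ n, u n ∈ A) :
    ∃ φ : ℕ → ℕ, StrictMono φ ∧ BourbakiCauchySeq (u ∘ φ) := by
  -- construct nested infinite index sets
  have key : ∀ k : ℕ, ∀ S : Set ℕ, S.Infinite →
      ∃ T : Set ℕ, T.Infinite ∧ T ⊆ S ∧
        ∃ mk : ℕ, ∃ p : X, ∀ n ∈ T, u n ∈ chainBall p (1 / (k + 1)) mk := by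
    intro k S hS
    have hε : (0 : ℝ) < 1 / (k + 1) := by positivity
    obtain ⟨mk, s, hs⟩ := hA (1 / (k + 1)) hε
    obtain ⟨p, _, hp⟩ := exists_infinite_subset hS
      (fun n _ => hs (hu n))
    exact ⟨_, hp, fun n hn => hn.1, mk, p, fun n hn => hn.2⟩
  choose T hT1 hT2 hT3 using key
  -- F k : k-th set
  let F : ℕ → {S : Set ℕ // S.Infinite} := fun k =>
    Nat.rec ⟨Set.univ, Set.infinite_univ⟩
      (fun k S => ⟨T k S.1 S.2, hT1 k S.1 S.2⟩) k
  have hFsub : ∀ k, (F (k + 1)).1 ⊆ (F k).1 := fun k => hT2 k _ _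
  have hFmono : ∀ j k, k ≤ j → (F j).1 ⊆ (F k).1 := by
    intro j k h
    induction h with
    | refl => exact subset_rfl
    | step _ ih => exact (hFsub _).trans ih
  have hFprop : ∀ k, ∃ mk : ℕ, ∃ p : X,
      ∀ n ∈ (F (k + 1)).1, u n ∈ chainBall p (1 / (k + 1)) mk := fun k => hT3 k _ _
  -- diagonal sequence
  have step : ∀ k : ℕ, ∀ b : ℕ, ∃ n ∈ (F (k + 1)).1, b < n := fun k b =>
    ((F (k + 1)).2.exists_gt b)
  choose g hg1 hg2 using step
  let φ : ℕ → ℕ := fun k => Nat.rec (g 0 0) (fun k n => g (k + 1) n) k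
  have hφmem : ∀ k, φ k ∈ (F (k + 1)).1 := by
    intro k
    cases k with
    | zero => exact hg1 0 0
    | succ k => exact hg1 (k + 1) (φ k)
  have hφmono : StrictMono φ := strictMono_nat_of_lt_succ fun k => hg2 (k + 1) (φ k)
  refine ⟨φ, hφmono, ?_⟩
  intro ε hε
  obtain ⟨k, hk⟩ := exists_nat_one_div_lt hε
  obtain ⟨mk, p, hp⟩ := hFprop k
  refine ⟨mk, k, p, fun n hn => ?_⟩
  have : φ n ∈ (F (k + 1)).1 := hFmono (n + 1) (k + 1) (by omega) (hφmem n)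
  exact chainBall_mono_eps hk.le mk (hp _ this)

end Aux

/-- A metric space is Bourbaki-complete iff the closure of every Bourbaki-bounded
subset is compact. -/
theorem isBourbakiComplete_iff_closure_compact (X : Type*) [MetricSpace X] :
    IsBourbakiComplete X ↔
      ∀ B : Set X, IsBourbakiBounded B → IsCompact (closure B) := by
  constructor
  · intro hX B hB
    rw [isCompact_iff_isSeqCompact]
    intro v hv
    obtain ⟨φ, hφ, hBC⟩ := exists_bourbakiCauchy_subseq (isBourbakiBounded_closure hB) hv
    obtain ⟨x, hx⟩ := hX (v ∘ φ) hBC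
    obtain ⟨ψ, hψ, hlim⟩ := TopologicalSpace.FirstCountableTopology.tendsto_subseq hx
    refine ⟨x, ?_, φ ∘ ψ, hφ.comp hψ, hlim⟩
    exact isClosed_closure.mem_of_tendsto hlim
      (Eventually.of_forall fun n => hv _)
  · intro h u hu
    have hbdd : IsBourbakiBounded (Set.range u) := by
      classical
      intro ε hε
      obtain ⟨m, n₀, p, hp⟩ := hu ε hε
      refine ⟨m, insert p ((Finset.range n₀).image u), ?_⟩
      rintro _ ⟨n, rfl⟩
      by_cases hn : n₀ ≤ n
      · exact Set.mem_iUnion₂.mpr ⟨p, Finset.mem_insert_self _ _, hp n hn⟩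
      · refine Set.mem_iUnion₂.mpr ⟨u n, ?_, mem_chainBall_self hε m⟩
        exact Finset.mem_insert_of_mem
          (Finset.mem_image.mpr ⟨n, Finset.mem_range.mpr (by omega), rfl⟩)
    have hc := h _ hbdd
    have : Filter.map u atTop ≤ Filter.principal (closure (Set.range u)) :=
      Filter.tendsto_principal.mpr
        (Eventually.of_forall fun n => subset_closure (Set.mem_range_self n))
    obtain ⟨x, _, hx⟩ := hc.exists_mapClusterPt this
    exact ⟨x, hx⟩
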